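/- Let B be an s×s matrix with ‖B‖ < 1 and let N_0,...,N_k be vectors. Then ‖ sum_{t=1}^k ((I−B)^{−1} N_t) − sum_{t=1}^k X_t ‖ ≤ (1/(1−‖B‖)) ( sum_{t=1}^k ‖B‖^{k−t+1} ‖N_t‖ + (‖B‖ − ‖B‖^{k+1}) ‖N_0‖ ), where X_t = sum_{i=0}^t B^{t−i} N_i. -/
import Mathlib

open Finset

lemma aux_pow_le {R : Type*} [NormedRing R] (h1 : ‖(1:R)‖ ≤ 1) (B : R) :
    ∀ n : ℕ, ‖B ^ n‖ ≤ ‖B‖ ^ n := by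
  intro n
  induction n with
  | zero => simpa using h1
  | succ n ih =>
    rw [pow_succ, pow_succ]
    exact (norm_mul_le _ _).trans (mul_le_mul_of_nonneg_right ih (norm_nonneg _))

lemma aux_sum_Icc_one {M : Type*} [AddCommMonoid M] (k : ℕ) (f : ℕ → M) :
    ∑ t ∈ Finset.Icc 1 k, f t = ∑ t ∈ Finset.range k, f (t + 1) := by
  rw [← Finset.Ico_add_one_right_eq_Icc, Finset.sum_Ico_eq_sum_range]
  simp [add_comm]

lemma aux_geom_Icc (r : ℝ) (k : ℕ) :
    (∑ j ∈ Finset.Icc 1 k, r ^ j) * (1 - r) = r - r ^ (k + 1) := by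
  induction k with
  | zero => simp
  | succ n ih =>
    rw [Finset.sum_Icc_succ_top (by omega), add_mul, ih]
    ring

lemma aux_err_bound {R : Type*} [NormedRing R] [HasSummableGeomSeries R]
    (h1 : ‖(1:R)‖ ≤ 1) (B : R) (hB : ‖B‖ < 1) (m : ℕ) :
    ‖Ring.inverse (1 - B) - ∑ j ∈ Finset.range m, B ^ j‖ ≤ ‖B‖ ^ m / (1 - ‖B‖) := by
  have hsum : Summable (fun i : ℕ => B ^ i) := summable_geometric_of_norm_lt_one hB
  have hinv : Ring.inverse (1 - B) = ∑' i : ℕ, B ^ i := (geom_series_eq_inverse B hB).symm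
  have h2 : (∑ j ∈ Finset.range m, B ^ j) + ∑' i : ℕ, B ^ (i + m) = ∑' i : ℕ, B ^ i :=
    Summable.sum_add_tsum_nat_add m hsum
  rw [hinv, ← h2, add_sub_cancel_left]
  have hnorm : Summable (fun i : ℕ => ‖B‖ ^ (i + m)) := by
    simpa [pow_add] using (summable_geometric_of_lt_one (norm_nonneg B) hB).mul_right (‖B‖ ^ m)
  have hns : Summable (fun i : ℕ => ‖B ^ (i + m)‖) :=
    hnorm.of_nonneg_of_le (fun _ => norm_nonneg _) (fun i => aux_pow_le h1 B _)
  calc ‖∑' i : ℕ, B ^ (i + m)‖ ≤ ∑' i : ℕ, ‖B ^ (i + m)‖ := norm_tsum_le_tsum_norm hns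
    _ ≤ ∑' i : ℕ, ‖B‖ ^ (i + m) :=
        Summable.tsum_le_tsum (fun i => aux_pow_le h1 B _) hns hnorm
    _ = ‖B‖ ^ m / (1 - ‖B‖) := by
        simp only [pow_add]
        rw [tsum_mul_right, tsum_geometric_of_lt_one (norm_nonneg B) hB,
          div_eq_mul_inv, mul_comm]

theorem stmt16 (s : ℕ) (B : EuclideanSpace ℝ (Fin s) →L[ℝ] EuclideanSpace ℝ (Fin s))
    (hB : ‖B‖ < 1) (k : ℕ) (N X : ℕ → EuclideanSpace ℝ (Fin s))
    (hX : ∀ t, X t = ∑ i ∈ Finset.range (t + 1), (B ^ (t - i)) (N i)) :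
    ‖(∑ t ∈ Finset.Icc 1 k, Ring.inverse (1 - B) (N t)) - ∑ t ∈ Finset.Icc 1 k, X t‖ ≤
      (1 / (1 - ‖B‖)) *
        ((∑ t ∈ Finset.Icc 1 k, ‖B‖ ^ (k - t + 1) * ‖N t‖) +
          (‖B‖ - ‖B‖ ^ (k + 1)) * ‖N 0‖) := by
  have h01 : (0:ℝ) < 1 - ‖B‖ := by linarith
  have h1 : ‖(1 : EuclideanSpace ℝ (Fin s) →L[ℝ] EuclideanSpace ℝ (Fin s))‖ ≤ 1 := by
    rw [ContinuousLinearMap.one_def]; exact ContinuousLinearMap.norm_id_le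
  -- key identity
  have hXsum : ∑ t ∈ Finset.Icc 1 k, X t
      = (∑ t ∈ Finset.Icc 1 k, (∑ j ∈ Finset.range (k - t + 1), B ^ j) (N t))
        + (∑ j ∈ Finset.Icc 1 k, B ^ j) (N 0) := by
    have e1 : ∑ t ∈ Finset.range (k+1), X t
        = ∑ i ∈ Finset.range (k+1), (∑ j ∈ Finset.range (k - i + 1), B ^ j) (N i) := by
      simp only [hX, Finset.range_eq_Ico]
      rw [← Finset.sum_Ico_Ico_comm 0 (k+1) (fun i t => (B ^ (t - i)) (N i))]
      apply Finset.sum_congr rfl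
      intro i hi
      simp only [Finset.mem_Ico] at hi
      rw [Finset.sum_Ico_eq_sum_range]
      have hk : k + 1 - i = k - i + 1 := by omega
      rw [hk, ContinuousLinearMap.sum_apply, ← Finset.range_eq_Ico]
      apply Finset.sum_congr rfl
      intro j hj
      have hij : i + j - i = j := by omega
      rw [hij]
    have e0 : X 0 = N 0 := by simp [hX 0]
    have e2 : ∑ t ∈ Finset.range (k+1), X t = X 0 + ∑ t ∈ Finset.Icc 1 k, X t := by
      rw [Finset.sum_range_succ' X k, aux_sum_Icc_one]
      exact add_comm _ _
    have e3 : ∑ i ∈ Finset.range (k+1), (∑ j ∈ Finset.range (k - i + 1), B ^ j) (N i)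
        = (∑ j ∈ Finset.range (k + 1), B ^ j) (N 0)
          + ∑ t ∈ Finset.Icc 1 k, (∑ j ∈ Finset.range (k - t + 1), B ^ j) (N t) := by
      rw [Finset.sum_range_succ' (fun i => (∑ j ∈ Finset.range (k - i + 1), B ^ j) (N i)) k,
        aux_sum_Icc_one]
      simp [add_comm]
    have e4 : (∑ j ∈ Finset.range (k + 1), B ^ j)
        = 1 + ∑ j ∈ Finset.Icc 1 k, B ^ j := by
      rw [Finset.sum_range_succ' (fun j => B ^ j) k, aux_sum_Icc_one]
      simp [add_comm]
    have h := e2.symm.trans (e1.trans e3)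
    rw [e0, e4] at h
    simp only [ContinuousLinearMap.add_apply, ContinuousLinearMap.one_apply] at h
    refine add_left_cancel (a := N 0) ?_
    rw [h]
    abel
  have key : (∑ t ∈ Finset.Icc 1 k, Ring.inverse (1 - B) (N t)) - ∑ t ∈ Finset.Icc 1 k, X t
      = (∑ t ∈ Finset.Icc 1 k,
          (Ring.inverse (1 - B) - ∑ j ∈ Finset.range (k - t + 1), B ^ j) (N t))
        - (∑ j ∈ Finset.Icc 1 k, B ^ j) (N 0) := by
    rw [hXsum]
    simp only [ContinuousLinearMap.sub_apply, Finset.sum_sub_distrib]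
    abel
  rw [key]
  have hgeom : ∑ j ∈ Finset.Icc 1 k, ‖B‖ ^ j = (‖B‖ - ‖B‖ ^ (k + 1)) / (1 - ‖B‖) := by
    rw [eq_div_iff (ne_of_gt h01)]
    exact aux_geom_Icc _ _
  have hbound1 : ∀ t ∈ Finset.Icc 1 k,
      ‖(Ring.inverse (1 - B) - ∑ j ∈ Finset.range (k - t + 1), B ^ j) (N t)‖
        ≤ (1 / (1 - ‖B‖)) * (‖B‖ ^ (k - t + 1) * ‖N t‖) := by
    intro t _
    calc ‖(Ring.inverse (1 - B) - ∑ j ∈ Finset.range (k - t + 1), B ^ j) (N t)‖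
        ≤ ‖Ring.inverse (1 - B) - ∑ j ∈ Finset.range (k - t + 1), B ^ j‖ * ‖N t‖ :=
          ContinuousLinearMap.le_opNorm _ _
      _ ≤ (‖B‖ ^ (k - t + 1) / (1 - ‖B‖)) * ‖N t‖ :=
          mul_le_mul_of_nonneg_right (aux_err_bound h1 B hB _) (norm_nonneg _)
      _ = (1 / (1 - ‖B‖)) * (‖B‖ ^ (k - t + 1) * ‖N t‖) := by ring
  have hbound2 : ‖(∑ j ∈ Finset.Icc 1 k, B ^ j) (N 0)‖
      ≤ (1 / (1 - ‖B‖)) * ((‖B‖ - ‖B‖ ^ (k + 1)) * ‖N 0‖) := by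
    calc ‖(∑ j ∈ Finset.Icc 1 k, B ^ j) (N 0)‖
        ≤ ‖∑ j ∈ Finset.Icc 1 k, B ^ j‖ * ‖N 0‖ := ContinuousLinearMap.le_opNorm _ _
      _ ≤ (∑ j ∈ Finset.Icc 1 k, ‖B‖ ^ j) * ‖N 0‖ :=
          mul_le_mul_of_nonneg_right
            ((norm_sum_le _ _).trans (Finset.sum_le_sum fun j _ => aux_pow_le h1 B j))
            (norm_nonneg _)
      _ = (1 / (1 - ‖B‖)) * ((‖B‖ - ‖B‖ ^ (k + 1)) * ‖N 0‖) := by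
          rw [hgeom]; ring
  calc ‖(∑ t ∈ Finset.Icc 1 k,
          (Ring.inverse (1 - B) - ∑ j ∈ Finset.range (k - t + 1), B ^ j) (N t))
        - (∑ j ∈ Finset.Icc 1 k, B ^ j) (N 0)‖
      ≤ ‖∑ t ∈ Finset.Icc 1 k,
          (Ring.inverse (1 - B) - ∑ j ∈ Finset.range (k - t + 1), B ^ j) (N t)‖
        + ‖(∑ j ∈ Finset.Icc 1 k, B ^ j) (N 0)‖ := norm_sub_le _ _
    _ ≤ (∑ t ∈ Finset.Icc 1 k, (1 / (1 - ‖B‖)) * (‖B‖ ^ (k - t + 1) * ‖N t‖))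
        + (1 / (1 - ‖B‖)) * ((‖B‖ - ‖B‖ ^ (k + 1)) * ‖N 0‖) :=
        add_le_add ((norm_sum_le _ _).trans (Finset.sum_le_sum hbound1)) hbound2
    _ = (1 / (1 - ‖B‖)) *
        ((∑ t ∈ Finset.Icc 1 k, ‖B‖ ^ (k - t + 1) * ‖N t‖) +
          (‖B‖ - ‖B‖ ^ (k + 1)) * ‖N 0‖) := by
        rw [← Finset.mul_sum]; ring
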